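/- arXiv:math-ph/0211015 — 2 statements merged into one kernel-verified Lean document; each statement's English description precedes it below -/
import Mathlib

section
/- Fix an integer ν ≥ 1, a bounded potential V : ℤ^ν → ℝ, and let H = H₀ + V. Then for every φ ∈ ℓ²(ℤ^ν), Δ((1 + (4ν)⁻¹V)φ, U(1 − (4ν)⁻¹V)φ; V) ≥ 2⟨φ, (H₀ − 2ν + (4ν)⁻¹V²)φ⟩, where (1 ± (4ν)⁻¹V)φ denotes the pointwise product n ↦ (1 ± (4ν)⁻¹V(n))φ(n) and V² is multiplication by V(n)². -/
noncomputable section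

open scoped ComplexConjugate

namespace DHKS

/-- The Hilbert space ℓ²(α; ℂ). -/
abbrev L2 (α : Type*) := lp (fun _ : α => ℂ) 2

variable {α β : Type*}

lemma memℓp_two_iff (f : α → ℂ) :
    Memℓp f 2 ↔ Summable (fun n => ‖f n‖ ^ (2 : ℝ)) := by
  rw [memℓp_gen_iff (by norm_num)]
  norm_num

lemma sum_sq_le (u : L2 α) (s : Finset α) :
    ∑ n ∈ s, ‖(u : α → ℂ) n‖ ^ (2:ℝ) ≤ ‖u‖ ^ (2:ℝ) := by
  simpa using lp.sum_rpow_le_norm_rpow (p := 2) (by norm_num) u s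

lemma norm_le_of_sum_sq (u : L2 α) {C : ℝ} (hC : 0 ≤ C)
    (h : ∀ s : Finset α, ∑ n ∈ s, ‖(u : α → ℂ) n‖ ^ (2:ℝ) ≤ C ^ (2:ℝ)) : ‖u‖ ≤ C := by
  refine lp.norm_le_of_forall_sum_le (p := 2) (by norm_num) hC ?_
  simpa using h

/-- Composition with an injective map, as a continuous linear map on ℓ². -/
def compOp (σ : α → β) (hσ : Function.Injective σ) : L2 β →L[ℂ] L2 α :=
  LinearMap.mkContinuous
    { toFun := fun u => ⟨fun n => (u : β → ℂ) (σ n), by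
        apply (memℓp_two_iff _).2
        exact ((memℓp_two_iff _).1 (lp.memℓp u)).comp_injective hσ⟩
      map_add' := by
        intro u v; apply lp.ext; funext n
        simp only [lp.coeFn_add, Pi.add_apply]
      map_smul' := by
        intro c u; apply lp.ext; funext n
        simp only [lp.coeFn_smul, Pi.smul_apply, RingHom.id_apply] }
    1 (by
      intro u
      rw [one_mul]
      refine norm_le_of_sum_sq _ (norm_nonneg u) (fun s => ?_)
      classical
      calc ∑ n ∈ s, ‖(u : β → ℂ) (σ n)‖ ^ (2:ℝ)
          = ∑ m ∈ s.image σ, ‖(u : β → ℂ) m‖ ^ (2:ℝ) := by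
            rw [Finset.sum_image (fun a _ b _ h => hσ h)]
        _ ≤ ‖u‖ ^ (2:ℝ) := sum_sq_le u _)

@[simp] lemma compOp_apply (σ : α → β) (hσ : Function.Injective σ) (u : L2 β) (n : α) :
    (compOp σ hσ u : α → ℂ) n = (u : β → ℂ) (σ n) := rfl

/-- Multiplication by a bounded real-valued function, as a continuous linear map on ℓ². -/
def mulOp (V : α → ℝ) (C : ℝ) (hC : ∀ n, |V n| ≤ C) : L2 α →L[ℂ] L2 α :=
  LinearMap.mkContinuous
    { toFun := fun u => ⟨fun n => (V n : ℂ) * (u : α → ℂ) n, by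
        apply (memℓp_two_iff _).2
        have h := (((memℓp_two_iff _).1 (lp.memℓp u)).mul_left ((max C 0) ^ (2:ℝ)))
        apply Summable.of_nonneg_of_le (fun n => by positivity) (fun n => ?_) h
        have h1 : ‖(V n : ℂ) * (u : α → ℂ) n‖ = |V n| * ‖(u : α → ℂ) n‖ := by
          rw [norm_mul, Complex.norm_real, Real.norm_eq_abs]
        rw [h1, Real.mul_rpow (abs_nonneg _) (norm_nonneg _)]
        have h3 : |V n| ^ (2:ℝ) ≤ (max C 0) ^ (2:ℝ) :=
          Real.rpow_le_rpow (abs_nonneg _) (le_max_of_le_left (hC n)) (by norm_num)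
        exact mul_le_mul_of_nonneg_right h3 (by positivity)⟩
      map_add' := by
        intro u v; apply lp.ext; funext n
        simp only [lp.coeFn_add, Pi.add_apply]
        ring
      map_smul' := by
        intro c u; apply lp.ext; funext n
        simp only [lp.coeFn_smul, Pi.smul_apply, RingHom.id_apply, smul_eq_mul]
        ring }
    (max C 0) (by
      intro u
      refine norm_le_of_sum_sq _ (by positivity) (fun s => ?_)
      have key : ∀ n ∈ s, ‖(V n : ℂ) * (u : α → ℂ) n‖ ^ (2:ℝ)
          ≤ (max C 0) ^ (2:ℝ) * ‖(u : α → ℂ) n‖ ^ (2:ℝ) := by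
        intro n _
        have h1 : ‖(V n : ℂ) * (u : α → ℂ) n‖ = |V n| * ‖(u : α → ℂ) n‖ := by
          rw [norm_mul, Complex.norm_real, Real.norm_eq_abs]
        rw [h1, Real.mul_rpow (abs_nonneg _) (norm_nonneg _)]
        have h3 : |V n| ^ (2:ℝ) ≤ (max C 0) ^ (2:ℝ) :=
          Real.rpow_le_rpow (abs_nonneg _) (le_max_of_le_left (hC n)) (by norm_num)
        exact mul_le_mul_of_nonneg_right h3 (by positivity)
      calc ∑ n ∈ s, ‖(V n : ℂ) * (u : α → ℂ) n‖ ^ (2:ℝ)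
          ≤ ∑ n ∈ s, (max C 0) ^ (2:ℝ) * ‖(u : α → ℂ) n‖ ^ (2:ℝ) := Finset.sum_le_sum key
        _ = (max C 0) ^ (2:ℝ) * ∑ n ∈ s, ‖(u : α → ℂ) n‖ ^ (2:ℝ) := by rw [Finset.mul_sum]
        _ ≤ (max C 0) ^ (2:ℝ) * ‖u‖ ^ (2:ℝ) :=
            mul_le_mul_of_nonneg_left (sum_sq_le u _) (by positivity)
        _ = (max C 0 * ‖u‖) ^ (2:ℝ) :=
            (Real.mul_rpow (le_max_right _ _) (norm_nonneg _)).symm)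

@[simp] lemma mulOp_apply (V : α → ℝ) (C : ℝ) (hC : ∀ n, |V n| ≤ C) (u : L2 α) (n : α) :
    (mulOp V C hC u : α → ℂ) n = (V n : ℂ) * (u : α → ℂ) n := rfl

/-- Extension by zero along an injective map, as a continuous linear map on ℓ². -/
def extOp (σ : α → β) (hσ : Function.Injective σ) : L2 α →L[ℂ] L2 β :=
  LinearMap.mkContinuous
    { toFun := fun u => ⟨Function.extend σ (u : α → ℂ) 0, by
        apply (memℓp_two_iff _).2
        have hpt : (fun b => ‖Function.extend σ (u : α → ℂ) 0 b‖ ^ (2:ℝ))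
            = Function.extend σ (fun a => ‖(u : α → ℂ) a‖ ^ (2:ℝ)) 0 := by
          funext b
          rcases em (∃ a, σ a = b) with ⟨a, rfl⟩ | hb
          · rw [hσ.extend_apply, hσ.extend_apply]
          · rw [Function.extend_apply' _ _ _ hb, Function.extend_apply' _ _ _ hb]
            simp [Real.zero_rpow (by norm_num : (2:ℝ) ≠ 0)]
        rw [hpt, summable_extend_zero hσ]
        exact (memℓp_two_iff _).1 (lp.memℓp u)⟩
      map_add' := by
        intro u v; apply lp.ext; funext b
        simp only [lp.coeFn_add, Pi.add_apply]
        rcases em (∃ a, σ a = b) with ⟨a, rfl⟩ | hb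
        · rw [hσ.extend_apply, hσ.extend_apply, hσ.extend_apply]
          simp [lp.coeFn_add]
        · rw [Function.extend_apply' _ _ _ hb, Function.extend_apply' _ _ _ hb,
            Function.extend_apply' _ _ _ hb]
          simp
      map_smul' := by
        intro c u; apply lp.ext; funext b
        simp only [lp.coeFn_smul, Pi.smul_apply, RingHom.id_apply, smul_eq_mul]
        rcases em (∃ a, σ a = b) with ⟨a, rfl⟩ | hb
        · rw [hσ.extend_apply, hσ.extend_apply]
          simp [lp.coeFn_smul]
        · rw [Function.extend_apply' _ _ _ hb, Function.extend_apply' _ _ _ hb]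
          simp }
    1 (by
      intro u
      rw [one_mul]
      refine norm_le_of_sum_sq _ (norm_nonneg u) (fun s => ?_)
      have hpt : (fun b => ‖Function.extend σ (u : α → ℂ) 0 b‖ ^ (2:ℝ))
          = Function.extend σ (fun a => ‖(u : α → ℂ) a‖ ^ (2:ℝ)) 0 := by
        funext b
        rcases em (∃ a, σ a = b) with ⟨a, rfl⟩ | hb
        · rw [hσ.extend_apply, hσ.extend_apply]
        · rw [Function.extend_apply' _ _ _ hb, Function.extend_apply' _ _ _ hb]
          simp [Real.zero_rpow (by norm_num : (2:ℝ) ≠ 0)]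
      have hsumm : Summable (fun a => ‖(u : α → ℂ) a‖ ^ (2:ℝ)) :=
        (memℓp_two_iff _).1 (lp.memℓp u)
      calc ∑ b ∈ s, ‖Function.extend σ (u : α → ℂ) 0 b‖ ^ (2:ℝ)
          ≤ ∑' b, ‖Function.extend σ (u : α → ℂ) 0 b‖ ^ (2:ℝ) := by
            refine Summable.sum_le_tsum s (fun b _ => by positivity) ?_
            rw [hpt, summable_extend_zero hσ]; exact hsumm
        _ = ∑' a, ‖(u : α → ℂ) a‖ ^ (2:ℝ) := by
            rw [hpt, tsum_extend_zero hσ]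
        _ = ‖u‖ ^ (2:ℝ) := by
            simpa using (lp.norm_rpow_eq_tsum (p := 2) (by norm_num) u).symm)

lemma extOp_apply (σ : α → β) (hσ : Function.Injective σ) (u : L2 α) (b : β) :
    (extOp σ hσ u : β → ℂ) b = Function.extend σ (u : α → ℂ) 0 b := rfl

/-- The real quadratic form ⟨φ, A φ⟩ of an operator. -/
def quadForm (A : L2 α →L[ℂ] L2 α) (φ : L2 α) : ℝ :=
  (inner ℂ φ (A φ) : ℂ).re

/-- `E` is an eigenvalue of the bounded operator `A`. -/
def IsEigenvalue (A : L2 α →L[ℂ] L2 α) (E : ℝ) : Prop :=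
  ∃ u : L2 α, u ≠ 0 ∧ A u = (E : ℂ) • u

lemma abs_mul_sq_le {γ x Cb : ℝ} (h : |x| ≤ Cb) : |γ * x ^ 2| ≤ |γ| * Cb ^ 2 := by
  have h1 := abs_le.1 h
  rw [abs_mul, abs_of_nonneg (sq_nonneg x)]
  exact mul_le_mul_of_nonneg_left (sq_le_sq' (by linarith [h1.1]) h1.2) (abs_nonneg γ)

end DHKS

namespace DHKS

/-! ## The lattice ℤ^ν -/

/-- The lattice `ℤ^ν`. -/
abbrev Zlat (ν : ℕ) := Fin ν → ℤ

/-- The ℓ¹-norm `|n|₁ = |n₁| + ⋯ + |n_ν|` of a lattice point. -/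
def normOne {ν : ℕ} (n : Zlat ν) : ℕ := ∑ i, (n i).natAbs

/-- The `i`-th standard unit vector in `ℤ^ν`. -/
def unitVec (ν : ℕ) (i : Fin ν) : Zlat ν := fun k => if k = i then 1 else 0

/-- The free discrete Schrödinger operator `(H₀ u)(n) = ∑_{|j|₁ = 1} u(n+j)`
on `ℓ²(ℤ^ν)`, written as the sum over translations by `± eᵢ`. -/
def H0 (ν : ℕ) : L2 (Zlat ν) →L[ℂ] L2 (Zlat ν) :=
  ∑ i : Fin ν,
    (compOp (fun n => n + unitVec ν i) (add_left_injective _) +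
      compOp (fun n => n + (-unitVec ν i)) (add_left_injective _))

lemma H0_apply {ν : ℕ} (u : L2 (Zlat ν)) (n : Zlat ν) :
    (H0 ν u : Zlat ν → ℂ) n =
      ∑ i : Fin ν, ((u : Zlat ν → ℂ) (n + unitVec ν i) + (u : Zlat ν → ℂ) (n - unitVec ν i)) := by
  rw [H0, ContinuousLinearMap.sum_apply, lp.coeFn_sum, Finset.sum_apply]
  simp [ContinuousLinearMap.add_apply, lp.coeFn_add, Pi.add_apply, sub_eq_add_neg]

/-- The unitary `(U φ)(n) = (-1)^{|n|₁} φ(n)`. -/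
def Uop (ν : ℕ) : L2 (Zlat ν) →L[ℂ] L2 (Zlat ν) :=
  mulOp (fun n => (-1 : ℝ) ^ normOne n) 1 (fun n => by simp [abs_pow])

/-- The discrete Schrödinger operator `H = H₀ + V` on `ℓ²(ℤ^ν)`. -/
def schrodinger (ν : ℕ) (V : Zlat ν → ℝ) (C : ℝ) (hC : ∀ n, |V n| ≤ C) :
    L2 (Zlat ν) →L[ℂ] L2 (Zlat ν) :=
  H0 ν + mulOp V C hC

/-- The quantity `Δ(φ₊, φ₋; V) = ⟨φ₊, (H-2ν)φ₊⟩ + ⟨φ₋, (-H-2ν)φ₋⟩`. -/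
def Delta (ν : ℕ) (V : Zlat ν → ℝ) (C : ℝ) (hC : ∀ n, |V n| ≤ C)
    (φp φm : L2 (Zlat ν)) : ℝ :=
  quadForm (schrodinger ν V C hC - ((2 * (ν:ℝ) : ℝ) : ℂ) • 1) φp +
    quadForm (-schrodinger ν V C hC - ((2 * (ν:ℝ) : ℝ) : ℂ) • 1) φm

end DHKS

namespace DHKS


/-! ### Auxiliary lemmas -/

section AuxQuad
variable {α : Type*}

lemma quadForm_add' (A B : L2 α →L[ℂ] L2 α) (φ : L2 α) :
    quadForm (A + B) φ = quadForm A φ + quadForm B φ := by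
  simp [quadForm, ContinuousLinearMap.add_apply, inner_add_right]

lemma inner_mulOp_symm (V : α → ℝ) (C : ℝ) (hC : ∀ n, |V n| ≤ C) (u v : L2 α) :
    (inner ℂ (mulOp V C hC u) v : ℂ) = inner ℂ u (mulOp V C hC v) := by
  rw [lp.inner_eq_tsum, lp.inner_eq_tsum]
  refine tsum_congr fun n => ?_
  simp only [RCLike.inner_apply, mulOp_apply, map_mul, Complex.conj_ofReal]
  ring

lemma mulOp_comp_eq (V : α → ℝ) (C : ℝ) (hC : ∀ n, |V n| ≤ C) (a : ℝ)
    (hC2 : ∀ n, |a * V n ^ 2| ≤ a * C ^ 2) (φ : L2 α) :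
    mulOp (fun n => a * V n ^ 2) (a * C ^ 2) hC2 φ
      = (a : ℂ) • mulOp V C hC (mulOp V C hC φ) := by
  apply lp.ext; funext n
  rw [lp.coeFn_smul]
  simp only [Pi.smul_apply, mulOp_apply, smul_eq_mul]
  push_cast
  ring

end AuxQuad

lemma neg_one_pow_natAbs_add_one (k : ℤ) :
    ((-1:ℝ) ^ (k+1).natAbs) = -((-1:ℝ) ^ k.natAbs) := by
  rcases Int.even_or_odd k with h | h
  · rw [(Int.natAbs_even.2 h).neg_one_pow, (Int.natAbs_odd.2 h.add_one).neg_one_pow]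
  · rw [(Int.natAbs_odd.2 h).neg_one_pow, (Int.natAbs_even.2 h.add_one).neg_one_pow]; ring

lemma neg_one_pow_natAbs_sub_one (k : ℤ) :
    ((-1:ℝ) ^ (k-1).natAbs) = -((-1:ℝ) ^ k.natAbs) := by
  rcases Int.even_or_odd k with h | h
  · rw [(Int.natAbs_even.2 h).neg_one_pow,
      (Int.natAbs_odd.2 (h.sub_odd odd_one)).neg_one_pow]
  · rw [(Int.natAbs_odd.2 h).neg_one_pow,
      (Int.natAbs_even.2 (h.sub_odd odd_one)).neg_one_pow]; ring

lemma normOne_split {ν : ℕ} (n : Zlat ν) (i : Fin ν) :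
    normOne n = (n i).natAbs + ∑ k ∈ Finset.univ.erase i, (n k).natAbs :=
  (Finset.add_sum_erase _ _ (Finset.mem_univ i)).symm

lemma negOnePow_normOne_add {ν : ℕ} (n : Zlat ν) (i : Fin ν) :
    ((-1:ℝ) ^ normOne (n + unitVec ν i)) = -((-1:ℝ) ^ normOne n) := by
  classical
  have h1 : normOne (n + unitVec ν i)
      = (n i + 1).natAbs + ∑ k ∈ Finset.univ.erase i, (n k).natAbs := by
    rw [normOne_split (n + unitVec ν i) i]
    congr 1
    · simp [unitVec]
    · refine Finset.sum_congr rfl fun k hk => ?_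
      simp [unitVec, (Finset.mem_erase.1 hk).1]
  rw [h1, normOne_split n i, pow_add, pow_add, neg_one_pow_natAbs_add_one]
  ring

lemma negOnePow_normOne_sub {ν : ℕ} (n : Zlat ν) (i : Fin ν) :
    ((-1:ℝ) ^ normOne (n - unitVec ν i)) = -((-1:ℝ) ^ normOne n) := by
  classical
  have h1 : normOne (n - unitVec ν i)
      = (n i - 1).natAbs + ∑ k ∈ Finset.univ.erase i, (n k).natAbs := by
    rw [normOne_split (n - unitVec ν i) i]
    congr 1
    · simp [unitVec]
    · refine Finset.sum_congr rfl fun k hk => ?_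
      simp [unitVec, (Finset.mem_erase.1 hk).1]
  rw [h1, normOne_split n i, pow_add, pow_add, neg_one_pow_natAbs_sub_one]
  ring

lemma Uop_apply {ν : ℕ} (u : L2 (Zlat ν)) (n : Zlat ν) :
    (Uop ν u : Zlat ν → ℂ) n = (((-1:ℝ) ^ normOne n : ℝ) : ℂ) * (u : Zlat ν → ℂ) n := rfl

lemma Uop_Uop {ν : ℕ} (u : L2 (Zlat ν)) : Uop ν (Uop ν u) = u := by
  apply lp.ext; funext n
  rw [Uop_apply, Uop_apply, ← mul_assoc, ← Complex.ofReal_mul, ← pow_add,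
    Even.neg_one_pow ⟨normOne n, rfl⟩]
  simp

lemma inner_Uop_symm {ν : ℕ} (u v : L2 (Zlat ν)) :
    (inner ℂ (Uop ν u) v : ℂ) = inner ℂ u (Uop ν v) :=
  inner_mulOp_symm _ _ _ u v

lemma inner_Uop_Uop {ν : ℕ} (u v : L2 (Zlat ν)) :
    (inner ℂ (Uop ν u) (Uop ν v) : ℂ) = inner ℂ u v := by
  rw [inner_Uop_symm, Uop_Uop]

lemma Uop_mulOp_comm {ν : ℕ} (V : Zlat ν → ℝ) (C : ℝ) (hC : ∀ n, |V n| ≤ C)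
    (u : L2 (Zlat ν)) : Uop ν (mulOp V C hC u) = mulOp V C hC (Uop ν u) := by
  apply lp.ext; funext n
  rw [Uop_apply, mulOp_apply, mulOp_apply, Uop_apply]
  ring

lemma Uop_H0_Uop (ν : ℕ) (u : L2 (Zlat ν)) :
    Uop ν (H0 ν (Uop ν u)) = - H0 ν u := by
  apply lp.ext; funext n
  rw [lp.coeFn_neg]
  simp only [Pi.neg_apply]
  rw [Uop_apply, H0_apply, H0_apply, Finset.mul_sum, ← Finset.sum_neg_distrib]
  refine Finset.sum_congr rfl fun i _ => ?_
  rw [Uop_apply, Uop_apply, negOnePow_normOne_add, negOnePow_normOne_sub]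
  have hsq : (((-1:ℝ) ^ normOne n : ℝ) : ℂ) * (((-1:ℝ) ^ normOne n : ℝ) : ℂ) = 1 := by
    rw [← Complex.ofReal_mul, ← pow_add,
      Even.neg_one_pow ⟨normOne n, rfl⟩]
    simp
  push_cast at hsq ⊢
  linear_combination (-((u : Zlat ν → ℂ) (n + unitVec ν i)
    + (u : Zlat ν → ℂ) (n - unitVec ν i))) * hsq

lemma norm_compOp_le {α β : Type*} (σ : α → β) (hσ : Function.Injective σ) :
    ‖compOp σ hσ‖ ≤ 1 :=
  LinearMap.mkContinuous_norm_le _ zero_le_one _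

lemma norm_H0_le (ν : ℕ) : ‖H0 ν‖ ≤ 2 * ν := by
  refine le_trans (norm_sum_le _ _) ?_
  calc ∑ i : Fin ν, ‖compOp (fun n => n + unitVec ν i) (add_left_injective _) +
        compOp (fun n => n + (-unitVec ν i)) (add_left_injective _)‖
      ≤ ∑ _i : Fin ν, (2:ℝ) := by
        refine Finset.sum_le_sum fun i _ => ?_
        refine le_trans (norm_add_le _ _) ?_
        linarith [norm_compOp_le (fun n : Zlat ν => n + unitVec ν i) (add_left_injective _),
          norm_compOp_le (fun n : Zlat ν => n + (-unitVec ν i)) (add_left_injective _)]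
    _ = 2 * ν := by simp [mul_comm]

lemma H0_re_inner_ge (ν : ℕ) (ψ : L2 (Zlat ν)) :
    -(2*(ν:ℝ)) * ‖ψ‖^2 ≤ (inner ℂ ψ (H0 ν ψ) : ℂ).re := by
  have h0 : ‖H0 ν ψ‖ ≤ 2*(ν:ℝ) * ‖ψ‖ :=
    le_trans ((H0 ν).le_opNorm ψ)
      (mul_le_mul_of_nonneg_right (norm_H0_le ν) (norm_nonneg _))
  have h1 : ‖(inner ℂ ψ (H0 ν ψ) : ℂ)‖ ≤ ‖ψ‖ * (2*(ν:ℝ) * ‖ψ‖) :=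
    le_trans (norm_inner_le_norm _ _) (mul_le_mul_of_nonneg_left h0 (norm_nonneg _))
  have h2 : |(inner ℂ ψ (H0 ν ψ) : ℂ).re| ≤ ‖(inner ℂ ψ (H0 ν ψ) : ℂ)‖ := by
    exact Complex.abs_re_le_norm _
  have h3 := (abs_le.1 (le_trans h2 h1)).1
  nlinarith [h3]

lemma quadT_ge (ν : ℕ) (ψ : L2 (Zlat ν)) :
    -(4*(ν:ℝ)) * ‖ψ‖^2 ≤ quadForm (H0 ν - ((2 * (ν:ℝ) : ℝ) : ℂ) • 1) ψ := by
  have h := H0_re_inner_ge ν ψ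
  have hs : (inner ℂ ψ ψ : ℂ).re = ‖ψ‖^2 := inner_self_eq_norm_sq (𝕜 := ℂ) ψ
  simp only [quadForm, ContinuousLinearMap.sub_apply, ContinuousLinearMap.smul_apply,
    ContinuousLinearMap.one_apply, inner_sub_right, inner_smul_right, Complex.sub_re,
    Complex.re_ofReal_mul, hs]
  nlinarith [h]

lemma quad_second (ν : ℕ) (V : Zlat ν → ℝ) (C : ℝ) (hC : ∀ n, |V n| ≤ C) (ψ : L2 (Zlat ν)) :
    quadForm (-schrodinger ν V C hC - ((2 * (ν:ℝ) : ℝ) : ℂ) • 1) (Uop ν ψ)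
      = quadForm (H0 ν - mulOp V C hC - ((2 * (ν:ℝ) : ℝ) : ℂ) • 1) ψ := by
  have h1 : H0 ν (Uop ν ψ) = - Uop ν (H0 ν ψ) := by
    have h := congrArg (Uop ν) (Uop_H0_Uop ν ψ)
    rwa [Uop_Uop, map_neg] at h
  have key : (-schrodinger ν V C hC - ((2 * (ν:ℝ) : ℝ) : ℂ) • 1) (Uop ν ψ)
      = Uop ν ((H0 ν - mulOp V C hC - ((2 * (ν:ℝ) : ℝ) : ℂ) • 1) ψ) := by
    simp only [schrodinger, ContinuousLinearMap.sub_apply, ContinuousLinearMap.neg_apply,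
      ContinuousLinearMap.add_apply, ContinuousLinearMap.smul_apply,
      ContinuousLinearMap.one_apply, map_sub, map_smul, h1, ← Uop_mulOp_comm]
    abel
  unfold quadForm
  rw [key, inner_Uop_Uop]

lemma quad_expand {α : Type*} (T M : L2 α →L[ℂ] L2 α) (u w : L2 α) :
    quadForm (T + M) (u + w) + quadForm (T - M) (u - w)
      = 2 * quadForm T u + 2 * quadForm T w
        + 2 * (inner ℂ u (M w) : ℂ).re + 2 * (inner ℂ w (M u) : ℂ).re := by
  simp only [quadForm, ContinuousLinearMap.add_apply, ContinuousLinearMap.sub_apply,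
    map_add, map_sub, inner_add_left, inner_add_right, inner_sub_left, inner_sub_right,
    Complex.add_re, Complex.sub_re]
  ring

lemma quadForm_smul_real {α : Type*} (A : L2 α →L[ℂ] L2 α) (a : ℝ) (x : L2 α) :
    quadForm A ((a:ℂ) • x) = a^2 * quadForm A x := by
  simp only [quadForm, map_smul, inner_smul_left, inner_smul_right, Complex.conj_ofReal]
  rw [← mul_assoc, ← Complex.ofReal_mul, Complex.re_ofReal_mul]
  ring

set_option maxHeartbeats 1200000 in
/-- Theorem 2.2: for every `φ ∈ ℓ²(ℤ^ν)`,
`Δ((1+(4ν)⁻¹V)φ, U(1−(4ν)⁻¹V)φ; V) ≥ 2⟨φ, (H₀ − 2ν + (4ν)⁻¹V²)φ⟩`. -/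
theorem statement1 (ν : ℕ) (hν : 1 ≤ ν) (V : Zlat ν → ℝ) (C : ℝ) (hC : ∀ n, |V n| ≤ C)
    (φ : L2 (Zlat ν)) :
    Delta ν V C hC
        ((1 + (((4 * (ν:ℝ))⁻¹ : ℝ) : ℂ) • mulOp V C hC) φ)
        (Uop ν ((1 - (((4 * (ν:ℝ))⁻¹ : ℝ) : ℂ) • mulOp V C hC) φ)) ≥
      2 * quadForm
        (H0 ν - ((2 * (ν:ℝ) : ℝ) : ℂ) • 1 +
          mulOp (fun n => (4 * (ν:ℝ))⁻¹ * V n ^ 2) ((4 * (ν:ℝ))⁻¹ * C ^ 2)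
            (fun n => by
              have h := abs_mul_sq_le (γ := (4 * (ν:ℝ))⁻¹) (hC n)
              rw [abs_of_nonneg (by positivity : (0:ℝ) ≤ (4 * (ν:ℝ))⁻¹)] at h
              simpa using h)) φ := by
  classical
  have hν0 : (0:ℝ) < ν := by exact_mod_cast Nat.lt_of_lt_of_le Nat.zero_lt_one hν
  set a : ℝ := (4*(ν:ℝ))⁻¹ with ha
  have ha0 : 0 < a := by positivity
  have ha4 : a * (4*(ν:ℝ)) = 1 := inv_mul_cancel₀ (by positivity)
  set M := mulOp V C hC with hM
  set c : ℂ := ((2 * (ν:ℝ) : ℝ) : ℂ) with hc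
  have hφp : (1 + (a:ℂ) • M) φ = φ + (a:ℂ) • M φ := by
    rw [ContinuousLinearMap.add_apply, ContinuousLinearMap.smul_apply,
      ContinuousLinearMap.one_apply]
  have hφm : (1 - (a:ℂ) • M) φ = φ - (a:ℂ) • M φ := by
    rw [ContinuousLinearMap.sub_apply, ContinuousLinearMap.smul_apply,
      ContinuousLinearMap.one_apply]
  have hs : (inner ℂ (mulOp V C hC φ) (mulOp V C hC φ) : ℂ).re = ‖mulOp V C hC φ‖^2 :=
    inner_self_eq_norm_sq (𝕜 := ℂ) _
  rw [Delta, hφp, hφm, quad_second]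
  have hop1 : schrodinger ν V C hC - c • 1 = (H0 ν - c • 1) + M := by
    simp only [schrodinger, hM]; abel
  have hop2 : H0 ν - M - c • 1 = (H0 ν - c • 1) - M := by abel
  rw [hop1, hop2, quad_expand, quadForm_add', quadForm_smul_real]
  have hW : quadForm (mulOp (fun n => a * V n ^ 2) (a * C ^ 2)
      (fun n => by
        have h := abs_mul_sq_le (γ := a) (hC n)
        rw [abs_of_nonneg ha0.le] at h
        simpa using h)) φ = a * ‖M φ‖^2 := by
    rw [quadForm, mulOp_comp_eq V C hC a _ φ, inner_smul_right, hM,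
      ← inner_mulOp_symm V C hC φ (mulOp V C hC φ), Complex.re_ofReal_mul, hs]
  rw [hW]
  have hMw : (inner ℂ φ (M ((a:ℂ) • M φ)) : ℂ).re = a * ‖M φ‖^2 := by
    rw [map_smul, inner_smul_right, hM, ← inner_mulOp_symm V C hC φ (mulOp V C hC φ),
      Complex.re_ofReal_mul, hs]
  have hwM : (inner ℂ ((a:ℂ) • M φ) (M φ) : ℂ).re = a * ‖M φ‖^2 := by
    rw [inner_smul_left, Complex.conj_ofReal, Complex.re_ofReal_mul, hM, hs]
  rw [hMw, hwM]
  have hQ := quadT_ge ν (M φ)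
  rw [← hc] at hQ
  have hR : (0:ℝ) ≤ ‖M φ‖^2 := sq_nonneg _
  have hkey : a^2 * (-(4*(ν:ℝ)) * ‖M φ‖^2) ≤ a^2 * quadForm (H0 ν - c • 1) (M φ) :=
    mul_le_mul_of_nonneg_left hQ (sq_nonneg a)
  have h5 : a ^ 2 * (-(4 * (ν:ℝ)) * ‖M φ‖ ^ 2) = -(a * ‖M φ‖ ^ 2) := by
    linear_combination (-(a * ‖M φ‖ ^ 2)) * ha4
  linarith [hkey, h5]

end DHKS
end
end

section
/- Let β ∈ [−1, 1] and define V : ℤ⁺ → ℝ by V(n) = β(−1)ⁿ/n. Then the operator J₀ + V has no eigenvalue E ∈ ℝ with |E| ≥ 2; in particular, J₀ + V has no bound states. -/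
noncomputable section

open scoped ComplexConjugate

namespace DHKS

/-! ## Half-line operators on ℓ²(ℤ⁺), with ℤ⁺ = {1, 2, 3, …} realized as `ℕ+` -/

lemma pnat_succ_injective : Function.Injective (fun n : ℕ+ => n + 1) := by
  intro a b h
  have : (a : ℕ) + 1 = (b : ℕ) + 1 := by exact_mod_cast congrArg (fun x : ℕ+ => (x : ℕ)) h
  exact PNat.coe_injective (Nat.succ_injective this)

/-- The shift `(S u)(n) = u(n+1)` on `ℓ²(ℤ⁺)`. -/
def shiftUp : L2 ℕ+ →L[ℂ] L2 ℕ+ := compOp (fun n => n + 1) pnat_succ_injective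

/-- The shift `(D u)(n) = u(n-1)` for `n ≥ 2`, `(D u)(1) = 0` (the convention `u(0) = 0`). -/
def shiftDown : L2 ℕ+ →L[ℂ] L2 ℕ+ := extOp (fun n => n + 1) pnat_succ_injective

@[simp] lemma shiftUp_apply (u : L2 ℕ+) (n : ℕ+) :
    (shiftUp u : ℕ+ → ℂ) n = (u : ℕ+ → ℂ) (n + 1) := rfl

@[simp] lemma shiftDown_apply_succ (u : L2 ℕ+) (m : ℕ+) :
    (shiftDown u : ℕ+ → ℂ) (m + 1) = (u : ℕ+ → ℂ) m := by
  exact pnat_succ_injective.extend_apply _ _ m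

@[simp] lemma shiftDown_apply_one (u : L2 ℕ+) : (shiftDown u : ℕ+ → ℂ) 1 = 0 := by
  have h : ¬∃ m : ℕ+, m + 1 = 1 := by
    rintro ⟨m, hm⟩
    exact (PNat.lt_add_left 1 m).ne' hm
  exact Function.extend_apply' (u : ℕ+ → ℂ) (0 : ℕ+ → ℂ) (1 : ℕ+) h

/-- The Jacobi matrix `(J u)(n) = aₙ u(n+1) + bₙ u(n) + a_{n-1} u(n-1)` (convention `u(0) = 0`)
on `ℓ²(ℤ⁺)`, for bounded sequences `a`, `b`. -/
def jacobiOp (a b : ℕ+ → ℝ) (Ca Cb : ℝ) (ha : ∀ n, |a n| ≤ Ca) (hb : ∀ n, |b n| ≤ Cb) :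
    L2 ℕ+ →L[ℂ] L2 ℕ+ :=
  mulOp a Ca ha ∘L shiftUp + mulOp b Cb hb + shiftDown ∘L mulOp a Ca ha

lemma jacobiOp_apply_succ (a b : ℕ+ → ℝ) (Ca Cb : ℝ) (ha : ∀ n, |a n| ≤ Ca)
    (hb : ∀ n, |b n| ≤ Cb) (u : L2 ℕ+) (m : ℕ+) :
    (jacobiOp a b Ca Cb ha hb u : ℕ+ → ℂ) (m + 1) =
      (a (m+1) : ℂ) * (u : ℕ+ → ℂ) (m + 2) + (b (m+1) : ℂ) * (u : ℕ+ → ℂ) (m + 1)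
        + (a m : ℂ) * (u : ℕ+ → ℂ) m := by
  have h2 : (m : ℕ+) + 2 = (m + 1) + 1 := by ring
  simp [jacobiOp, ContinuousLinearMap.add_apply, lp.coeFn_add, Pi.add_apply, h2]

lemma jacobiOp_apply_one (a b : ℕ+ → ℝ) (Ca Cb : ℝ) (ha : ∀ n, |a n| ≤ Ca)
    (hb : ∀ n, |b n| ≤ Cb) (u : L2 ℕ+) :
    (jacobiOp a b Ca Cb ha hb u : ℕ+ → ℂ) 1 =
      (a 1 : ℂ) * (u : ℕ+ → ℂ) 2 + (b 1 : ℂ) * (u : ℕ+ → ℂ) 1 := by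
  have h2 : (2 : ℕ+) = 1 + 1 := rfl
  simp [jacobiOp, ContinuousLinearMap.add_apply, lp.coeFn_add, Pi.add_apply, h2]

/-- The free half-line discrete Schrödinger operator `J₀`:  `(J₀ u)(n) = u(n+1) + u(n-1)`
with the convention `u(0) = 0`. -/
def J0 : L2 ℕ+ →L[ℂ] L2 ℕ+ := shiftUp + shiftDown

/-- The unitary `(U φ)(n) = (-1)^n φ(n)` on `ℓ²(ℤ⁺)`. -/
def UopHalf : L2 ℕ+ →L[ℂ] L2 ℕ+ :=
  mulOp (fun n => (-1 : ℝ) ^ (n : ℕ)) 1 (fun n => by simp [abs_pow])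

end DHKS

namespace DHKS

/-- The potential `V(n) = β (-1)ⁿ / n`. -/
def altPot (β : ℝ) : ℕ+ → ℝ := fun n => β * (-1) ^ (n : ℕ) / (n : ℝ)

lemma altPot_bound (β : ℝ) (hβ : |β| ≤ 1) : ∀ n, |altPot β n| ≤ 1 := by
  intro n
  unfold altPot
  rw [abs_div, abs_mul, abs_pow, abs_neg, abs_one, one_pow, mul_one]
  rw [div_le_one (by exact_mod_cast n.pos)]
  calc |β| ≤ 1 := hβ
    _ ≤ |(n : ℝ)| := by
        rw [abs_of_nonneg (by positivity)]
        exact_mod_cast n.one_le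
  
open Filter Topology


/-- The discrete potential over ℕ. -/
def Vp (β : ℝ) (k : ℕ) : ℝ := β * (-1) ^ k / k

/-- The Dirichlet solution of the difference equation at energy 2. -/
def gseq (β : ℝ) : ℕ → ℝ
  | 0 => 0
  | 1 => 1
  | (n+2) => (2 - Vp β (n+1)) * gseq β (n+1) - gseq β n

lemma gseq_zero (β : ℝ) : gseq β 0 = 0 := rfl
lemma gseq_one (β : ℝ) : gseq β 1 = 1 := rfl
lemma gseq_rec (β : ℝ) (n : ℕ) :
    gseq β (n+2) = (2 - Vp β (n+1)) * gseq β (n+1) - gseq β n := rfl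

lemma neg_one_pow_cases (n : ℕ) : ((-1:ℝ))^n = 1 ∨ ((-1:ℝ))^n = -1 := by
  rcases Nat.even_or_odd n with h | h
  · left; exact h.neg_one_pow
  · right; exact h.neg_one_pow

lemma gseq_inv (β : ℝ) (hβ1 : -1 ≤ β) (hβ2 : β ≤ 1) : ∀ n : ℕ,
    1 ≤ gseq β (n+1) ∧ gseq β (n+1) ≤ gseq β (n+2) ∧
      (1 - Vp β (n+1)) * gseq β (n+1) ≤ gseq β (n+2) := by
  intro n
  induction n with
  | zero =>
      have hV : Vp β 1 = -β := by simp [Vp]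
      have h2 : gseq β 2 = 2 + β := by
        rw [gseq_rec, hV, gseq_one, gseq_zero]; ring
      refine ⟨le_refl _, ?_, ?_⟩
      · rw [h2, gseq_one]; linarith
      · rw [h2, hV, gseq_one]; ring_nf; linarith
  | succ n ih =>
      obtain ⟨h1, h2, h3⟩ := ih
      have hg2 : (1:ℝ) ≤ gseq β (n+2) := le_trans h1 h2
      -- key step: gseq β (n+1+1) ≤ gseq β (n+1+2)
      set b : ℝ := β * (-1)^(n+2) with hb
      have hbabs : -1 ≤ b ∧ b ≤ 1 := by
        rcases neg_one_pow_cases (n+2) with h | h <;> rw [hb, h] <;>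
          constructor <;> nlinarith
      have hVn2 : Vp β (n+2) = b / (n+2) := by
        rw [Vp, hb]; norm_num
      have hVn1 : Vp β (n+1) = -b / (n+1) := by
        rw [Vp, hb]
        have : ((-1:ℝ))^(n+2) = -(-1)^(n+1) := by ring
        rw [this]
        push_cast
        ring
      have hn1 : (0:ℝ) < (n:ℝ) + 1 := by positivity
      have hn2 : (0:ℝ) < (n:ℝ) + 2 := by positivity
      have hcast1 : ((n+1 : ℕ) : ℝ) = (n:ℝ) + 1 := by push_cast; ring
      have hcast2 : ((n+2 : ℕ) : ℝ) = (n:ℝ) + 2 := by push_cast; ring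
      have hmono : gseq β (n+2) ≤ gseq β (n+3) := by
        have hrec : gseq β (n+3) = (2 - Vp β (n+2)) * gseq β (n+2) - gseq β (n+1) :=
          gseq_rec β (n+1)
        -- need : gseq β (n+1) ≤ (1 - Vp β (n+2)) * gseq β (n+2)
        rcases le_or_gt b 0 with hbneg | hbpos
        · have hv : Vp β (n+2) ≤ 0 := by
            rw [hVn2]
            exact div_nonpos_of_nonpos_of_nonneg hbneg (le_of_lt hn2)
          nlinarith [h2, h1, hg2]
        · -- b > 0 : use h3 : (1 + b/(n+1)) * g(n+1) ≤ g(n+2)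
          have h3' : (1 + b/((n:ℝ)+1)) * gseq β (n+1) ≤ gseq β (n+2) := by
            rw [hVn1] at h3
            have : 1 - -b / ((n:ℝ)+1) = 1 + b/((n:ℝ)+1) := by ring
            rwa [this] at h3
          have hvpos : (0:ℝ) < 1 - b/((n:ℝ)+2) := by
            rw [sub_pos, div_lt_one hn2]; linarith [hbabs.2]
          have hkey : gseq β (n+1) ≤ (1 - b/((n:ℝ)+2)) * gseq β (n+2) := by
            have c1 : (1 - b/((n:ℝ)+2)) * ((1 + b/((n:ℝ)+1)) * gseq β (n+1))
                ≤ (1 - b/((n:ℝ)+2)) * gseq β (n+2) :=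
              mul_le_mul_of_nonneg_left h3' (le_of_lt hvpos)
            have c2 : gseq β (n+1)
                ≤ (1 - b/((n:ℝ)+2)) * ((1 + b/((n:ℝ)+1)) * gseq β (n+1)) := by
              have hprod : (1:ℝ) ≤ (1 - b/((n:ℝ)+2)) * (1 + b/((n:ℝ)+1)) := by
                have expand : (1 - b/((n:ℝ)+2)) * (1 + b/((n:ℝ)+1))
                    = 1 + (b - b^2) / (((n:ℝ)+1) * ((n:ℝ)+2)) := by
                  field_simp
                  ring
                rw [expand]
                have : (0:ℝ) ≤ (b - b^2) / (((n:ℝ)+1) * ((n:ℝ)+2)) := by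
                  apply div_nonneg _ (by positivity)
                  nlinarith [hbabs.2]
                linarith
              nlinarith [h1]
            linarith
          rw [hrec, hVn2]
          nlinarith [hkey]
      refine ⟨hg2, hmono, ?_⟩
      · -- (1 - Vp β (n+2)) * g(n+2) ≤ g(n+3), from recurrence and g(n+1) ≤ g(n+2)
        rw [gseq_rec β (n+1)]
        nlinarith [h2]

lemma gseq_ge_one (β : ℝ) (hβ1 : -1 ≤ β) (hβ2 : β ≤ 1) (n : ℕ) :
    1 ≤ gseq β (n+1) := (gseq_inv β hβ1 hβ2 n).1

lemma gseq_pos (β : ℝ) (hβ1 : -1 ≤ β) (hβ2 : β ≤ 1) (n : ℕ) :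
    0 < gseq β (n+1) := by linarith [gseq_ge_one β hβ1 hβ2 n]

/-- Core lemma: a real solution of the eigenvalue equation at energy `E ≥ 2`
that tends to zero vanishes identically. -/
lemma core (β E : ℝ) (hβ1 : -1 ≤ β) (hβ2 : β ≤ 1) (hE : 2 ≤ E) (w : ℕ → ℝ)
    (h0 : w 0 = 0)
    (hrec : ∀ n : ℕ, w (n+2) + w n + Vp β (n+1) * w (n+1) = E * w (n+1))
    (hlim : Tendsto w atTop (𝓝 0)) :
    ∀ n, w n = 0 := by
  set g : ℕ → ℝ := gseq β with hg
  have gpos : ∀ n : ℕ, 0 < g (n+1) := fun n => gseq_pos β hβ1 hβ2 n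
  have gge1 : ∀ n : ℕ, 1 ≤ g (n+1) := fun n => gseq_ge_one β hβ1 hβ2 n
  set F : ℕ → ℝ := fun n => w n * (g n * w (n+1) - g (n+1) * w n) / g n with hF
  -- step identity
  have hstep : ∀ n : ℕ, F (n+2) - F (n+1)
      = (E-2) * w (n+2)^2
        + g (n+1) * g (n+2) * (w (n+2)/g (n+2) - w (n+1)/g (n+1))^2 := by
    intro n
    have hw : w (n+3) = E * w (n+2) - w (n+1) - Vp β (n+2) * w (n+2) := by
      have := hrec (n+1); linarith
    have hgr : g (n+3) = (2 - Vp β (n+2)) * g (n+2) - g (n+1) := gseq_rec β (n+1)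
    have ha : g (n+1) ≠ 0 := ne_of_gt (gpos n)
    have hb : g (n+2) ≠ 0 := ne_of_gt (gpos (n+1))
    simp only [hF, hw, hgr]
    field_simp
    ring
  have hstep0 : ∀ n : ℕ, 0 ≤ F (n+2) - F (n+1) := by
    intro n
    rw [hstep n]
    have h1 : (0:ℝ) ≤ (E-2) * w (n+2)^2 :=
      mul_nonneg (by linarith) (sq_nonneg _)
    have h2 : (0:ℝ) ≤ g (n+1) * g (n+2) * (w (n+2)/g (n+2) - w (n+1)/g (n+1))^2 := by
      have := gpos n; have := gpos (n+1); positivity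
    linarith
  have hF1 : F 1 = (E-2) * (w 1)^2 := by
    have hw2 : w 2 = E * w 1 - w 0 - Vp β 1 * w 1 := by have := hrec 0; linarith
    have hg1 : g 1 = 1 := gseq_one β
    have hg2 : g 2 = (2 - Vp β 1) * 1 - 0 := by
      rw [hg, gseq_rec β 0, gseq_one, gseq_zero]
    simp only [hF, hw2, hg2, hg1, h0]
    ring
  have hmono : ∀ m n : ℕ, 1 ≤ m → m ≤ n → F m ≤ F n := by
    intro m n hm hmn
    induction n, hmn using Nat.le_induction with
    | base => exact le_refl _
    | succ n hmn ih =>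
        refine le_trans ih ?_
        obtain ⟨k, hk⟩ : ∃ k, n = k + 1 := ⟨n - 1, by omega⟩
        subst hk
        linarith [hstep0 k]
  have hub : ∀ n : ℕ, F (n+1) ≤ w (n+1) * w (n+2) := by
    intro n
    have ha : g (n+1) ≠ 0 := ne_of_gt (gpos n)
    have : F (n+1) = w (n+1) * w (n+2) - g (n+2) * (w (n+1))^2 / g (n+1) := by
      simp only [hF]; field_simp
    rw [this]
    have : 0 ≤ g (n+2) * (w (n+1))^2 / g (n+1) := by
      have := gpos n; have := gpos (n+1); positivity
    linarith
  have hprod : Tendsto (fun n => w (n+1) * w (n+2)) atTop (𝓝 0) := by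
    have h1 : Tendsto (fun n => w (n+1)) atTop (𝓝 0) :=
      hlim.comp (tendsto_add_atTop_nat 1)
    have h2 : Tendsto (fun n => w (n+2)) atTop (𝓝 0) :=
      hlim.comp (tendsto_add_atTop_nat 2)
    simpa using h1.mul h2
  have hFle : ∀ n : ℕ, F (n+1) ≤ 0 := by
    intro n
    refine ge_of_tendsto hprod ?_
    filter_upwards [eventually_ge_atTop n] with m hm
    exact le_trans (hmono (n+1) (m+1) (by omega) (by omega)) (hub m)
  have hFge : ∀ n : ℕ, 0 ≤ F (n+1) := by
    intro n
    have : F 1 ≤ F (n+1) := hmono 1 (n+1) le_rfl (by omega)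
    have h1 : 0 ≤ F 1 := by
      rw [hF1]; exact mul_nonneg (by linarith) (sq_nonneg _)
    linarith
  have hFz : ∀ n : ℕ, F (n+1) = 0 := fun n => le_antisymm (hFle n) (hFge n)
  -- increments vanish, so ratios are constant
  have hratio : ∀ n : ℕ, w (n+2)/g (n+2) = w (n+1)/g (n+1) := by
    intro n
    have h := hstep n
    rw [hFz (n+1), hFz n, sub_self] at h
    have h1 : (0:ℝ) ≤ (E-2) * w (n+2)^2 :=
      mul_nonneg (by linarith) (sq_nonneg _)
    have h2 : (0:ℝ) ≤ g (n+1) * g (n+2) * (w (n+2)/g (n+2) - w (n+1)/g (n+1))^2 := by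
      have := gpos n; have := gpos (n+1); positivity
    have h3 : g (n+1) * g (n+2) * (w (n+2)/g (n+2) - w (n+1)/g (n+1))^2 = 0 := by
      linarith
    have hgg : 0 < g (n+1) * g (n+2) := mul_pos (gpos n) (gpos (n+1))
    have := (mul_eq_zero.1 h3).resolve_left (ne_of_gt hgg)
    have := pow_eq_zero_iff (n := 2) (by norm_num) |>.1 this
    linarith [sub_eq_zero.1 this]
  have hlin : ∀ n : ℕ, w (n+1) = w 1 * g (n+1) := by
    intro n
    induction n with
    | zero => rw [hg, gseq_one]; ring
    | succ n ih =>
        have hr := hratio n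
        have ha : g (n+1) ≠ 0 := ne_of_gt (gpos n)
        have hb : g (n+2) ≠ 0 := ne_of_gt (gpos (n+1))
        rw [div_eq_div_iff hb ha] at hr
        have : w (n+2) * g (n+1) = w 1 * g (n+2) * g (n+1) := by
          rw [hr, ih]; ring
        exact mul_right_cancel₀ ha this
  have hw1 : w 1 = 0 := by
    have habs : Tendsto (fun n => |w n|) atTop (𝓝 0) := by
      simpa using hlim.abs
    have hle : |w 1| ≤ 0 := by
      refine ge_of_tendsto habs ?_
      filter_upwards [eventually_ge_atTop 1] with m hm
      obtain ⟨k, hk⟩ : ∃ k, m = k + 1 := ⟨m - 1, by omega⟩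
      subst hk
      rw [hlin k, abs_mul, abs_of_pos (gpos k)]
      nlinarith [gge1 k, abs_nonneg (w 1)]
    have := abs_nonneg (w 1)
    have : |w 1| = 0 := le_antisymm hle this
    exact abs_eq_zero.1 this
  intro n
  cases n with
  | zero => exact h0
  | succ n => rw [hlin n, hw1, zero_mul]


lemma core' (β E : ℝ) (hβ1 : -1 ≤ β) (hβ2 : β ≤ 1) (hE : E ≤ -2) (w : ℕ → ℝ)
    (h0 : w 0 = 0)
    (hrec : ∀ n : ℕ, w (n+2) + w n + Vp β (n+1) * w (n+1) = E * w (n+1))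
    (hlim : Tendsto w atTop (𝓝 0)) :
    ∀ n, w n = 0 := by
  set w' : ℕ → ℝ := fun n => (-1)^n * w n with hw'
  have hrec' : ∀ n : ℕ, w' (n+2) + w' n + Vp (-β) (n+1) * w' (n+1) = (-E) * w' (n+1) := by
    intro n
    have h := hrec n
    simp only [Vp] at h ⊢
    have hp1 : ((-1:ℝ))^(n+1) = -(-1:ℝ)^n := by rw [pow_succ]; ring
    have hp2 : ((-1:ℝ))^(n+2) = (-1:ℝ)^n := by rw [pow_succ, pow_succ]; ring
    rcases neg_one_pow_cases n with h1 | h1 <;>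
      · rw [hp1, h1] at h ⊢
        simp only [hw', hp1, hp2, h1]
        push_cast at h ⊢
        ring_nf at h ⊢
        linarith
  have hlim' : Tendsto w' atTop (𝓝 0) := by
    rw [tendsto_zero_iff_abs_tendsto_zero]
    have heq : (abs ∘ w') = fun n => |w n| := by
      funext n
      simp only [Function.comp_apply, hw']
      rw [abs_mul, abs_pow, abs_neg, abs_one, one_pow, one_mul]
    rw [heq]
    simpa using hlim.abs
  have h0' : w' 0 = 0 := by simp [hw', h0]
  have hz := core (-β) (-E) (by linarith) (by linarith) (by linarith) w' h0' hrec' hlim'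
  intro n
  have := hz n
  rcases neg_one_pow_cases n with h1 | h1 <;>
    · rw [hw'] at this
      simp only [h1] at this
      linarith

/-- Proposition 5.9: for `β ∈ [-1,1]` and `V(n) = β(-1)ⁿ/n`, the operator
`J₀ + V` has no eigenvalue `E` with `|E| ≥ 2`. -/
theorem statement18 (β : ℝ) (hβ1 : -1 ≤ β) (hβ2 : β ≤ 1) :
    ∀ E : ℝ, 2 ≤ |E| →
      ¬IsEigenvalue (J0 + mulOp (altPot β) 1 (altPot_bound β (abs_le.2 ⟨hβ1, hβ2⟩))) E := by
  intro E hE hEig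
  obtain ⟨u, hu0, huE⟩ := hEig
  -- pointwise eigenvalue equation
  have hpt : ∀ n : ℕ+, (u : ℕ+ → ℂ) (n+1) + (shiftDown u : ℕ+ → ℂ) n
      + ((altPot β n : ℝ) : ℂ) * (u : ℕ+ → ℂ) n = (E : ℂ) * (u : ℕ+ → ℂ) n := by
    intro n
    have h := congrArg (fun v : L2 ℕ+ => (v : ℕ+ → ℂ) n) huE
    simp only [ContinuousLinearMap.add_apply, J0, lp.coeFn_add, Pi.add_apply,
      mulOp_apply, lp.coeFn_smul, Pi.smul_apply, smul_eq_mul, shiftUp_apply] at h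
    exact h
  -- the ℕ-indexed sequence
  set c : ℕ → ℂ := fun k => match k with
    | 0 => 0
    | (j+1) => (u : ℕ+ → ℂ) (Nat.succPNat j) with hc_def
  have hc : ∀ k : ℕ, c (k+2) + c k + ((Vp β (k+1) : ℝ) : ℂ) * c (k+1)
      = (E:ℂ) * c (k+1) := by
    intro k
    cases k with
    | zero =>
        have h := hpt 1
        rw [shiftDown_apply_one] at h
        have e1 : (1 : ℕ+) + 1 = Nat.succPNat 1 := rfl
        have e2 : (1 : ℕ+) = Nat.succPNat 0 := rfl
        have hV : altPot β 1 = Vp β 1 := by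
          simp [altPot, Vp, PNat.one_coe]
        rw [e1, hV] at h
        show (u : ℕ+ → ℂ) (Nat.succPNat 1) + 0 + ((Vp β 1 : ℝ) : ℂ) * (u : ℕ+ → ℂ) (Nat.succPNat 0)
          = (E:ℂ) * (u : ℕ+ → ℂ) (Nat.succPNat 0)
        rw [← e2]
        linear_combination h
    | succ j =>
        have h := hpt (Nat.succPNat j + 1)
        rw [shiftDown_apply_succ] at h
        have e1 : Nat.succPNat j + 1 = Nat.succPNat (j+1) := rfl
        have e2 : Nat.succPNat (j+1) + 1 = Nat.succPNat (j+2) := rfl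
        have hV : altPot β (Nat.succPNat (j+1)) = Vp β (j+2) := by
          simp only [altPot, Vp, Nat.succPNat_coe]
          try push_cast
          try ring_nf
        rw [e1, e2, hV] at h
        show (u : ℕ+ → ℂ) (Nat.succPNat (j+2)) + (u : ℕ+ → ℂ) (Nat.succPNat j)
            + ((Vp β (j+2) : ℝ) : ℂ) * (u : ℕ+ → ℂ) (Nat.succPNat (j+1))
          = (E:ℂ) * (u : ℕ+ → ℂ) (Nat.succPNat (j+1))
        linear_combination h
  -- decay of the sequence
  have hclim : Tendsto c atTop (𝓝 0) := by
    have hsum : Summable (fun n : ℕ+ => ‖(u : ℕ+ → ℂ) n‖ ^ (2:ℝ)) :=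
      (memℓp_two_iff _).1 (lp.memℓp u)
    have hsum2 : Summable (fun k : ℕ => ‖(u : ℕ+ → ℂ) (Nat.succPNat k)‖ ^ (2:ℝ)) :=
      hsum.comp_injective Nat.succPNat_injective
    have hr2 : Tendsto (fun k : ℕ => ‖(u : ℕ+ → ℂ) (Nat.succPNat k)‖ ^ (2:ℝ)) atTop (𝓝 0) :=
      hsum2.tendsto_atTop_zero
    have hr : Tendsto (fun k : ℕ => ‖(u : ℕ+ → ℂ) (Nat.succPNat k)‖) atTop (𝓝 0) := by
      have h := hr2.rpow_const (p := (2:ℝ)⁻¹) (Or.inr (by norm_num))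
      have heq : ∀ k : ℕ, (‖(u : ℕ+ → ℂ) (Nat.succPNat k)‖ ^ (2:ℝ)) ^ ((2:ℝ)⁻¹)
          = ‖(u : ℕ+ → ℂ) (Nat.succPNat k)‖ := by
        intro k
        rw [← Real.rpow_mul (norm_nonneg _)]
        norm_num
      have h0 : ((0:ℝ) ^ ((2:ℝ)⁻¹)) = 0 := by
        rw [Real.zero_rpow (by norm_num)]
      rw [h0] at h
      simp only [heq] at h
      exact h
    rw [tendsto_zero_iff_norm_tendsto_zero]
    have hshift : Tendsto (fun k : ℕ => ‖c (k+1)‖) atTop (𝓝 0) := hr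
    exact (tendsto_add_atTop_iff_nat 1).1 hshift
  -- real and imaginary parts
  have hre : ∀ k : ℕ, (c k).re = 0 ∧ (c k).im = 0 := by
    have hlre : Tendsto (fun k => (c k).re) atTop (𝓝 0) := by
      have := (Complex.continuous_re.tendsto (0:ℂ)).comp hclim
      exact this
    have hlim' : Tendsto (fun k => (c k).im) atTop (𝓝 0) := by
      have := (Complex.continuous_im.tendsto (0:ℂ)).comp hclim
      exact this
    have hrecre : ∀ n : ℕ, (fun k => (c k).re) (n+2) + (fun k => (c k).re) n
        + Vp β (n+1) * (fun k => (c k).re) (n+1) = E * (fun k => (c k).re) (n+1) := by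
      intro n
      have := congrArg Complex.re (hc n)
      simpa [Complex.add_re, Complex.mul_re, Complex.ofReal_re, Complex.ofReal_im] using this
    have hrecim : ∀ n : ℕ, (fun k => (c k).im) (n+2) + (fun k => (c k).im) n
        + Vp β (n+1) * (fun k => (c k).im) (n+1) = E * (fun k => (c k).im) (n+1) := by
      intro n
      have := congrArg Complex.im (hc n)
      simpa [Complex.add_im, Complex.mul_im, Complex.ofReal_re, Complex.ofReal_im] using this
    have h0re : (fun k => (c k).re) 0 = 0 := by simp [hc_def]
    have h0im : (fun k => (c k).im) 0 = 0 := by simp [hc_def]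
    rcases le_abs.1 hE with hE2 | hE2
    · exact fun k => ⟨core β E hβ1 hβ2 hE2 _ h0re hrecre hlre k,
        core β E hβ1 hβ2 hE2 _ h0im hrecim hlim' k⟩
    · have hE2' : E ≤ -2 := by linarith
      exact fun k => ⟨core' β E hβ1 hβ2 hE2' _ h0re hrecre hlre k,
        core' β E hβ1 hβ2 hE2' _ h0im hrecim hlim' k⟩
  have hcz : ∀ k : ℕ, c k = 0 := fun k => Complex.ext (hre k).1 (hre k).2
  apply hu0
  apply lp.ext
  funext n
  have h1 : (u : ℕ+ → ℂ) n = c (n.natPred + 1) := by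
    have : Nat.succPNat n.natPred = n := PNat.succPNat_natPred n
    simp only [hc_def, this]
  rw [show ((0 : L2 ℕ+) : ℕ+ → ℂ) n = 0 from by simp [lp.coeFn_zero], h1]
  exact hcz (n.natPred + 1)

end DHKS
end
end
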